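/- Let G be a positive linearly ordered cancellative monoid and R a ring. Then R is right cP-Baer if and only if the monoid ring R[G] is right cP-Baer. -/

import Mathlib

/-- A ring `S` is right 𝔠𝔓-Baer if for every idempotent `e` of `S` there exists an
idempotent `c` with `r_S(eS) = cS`. -/
def IsRightCPBaer (S : Type*) [Ring S] : Prop :=
  ∀ e : S, e * e = e → ∃ c : S, c * c = c ∧
    ∀ a : S, (∀ r : S, e * r * a = 0) ↔ ∃ r : S, a = c * r

set_option linter.unusedSectionVars false

section Aux

variable {R : Type*} [Ring R] {G : Type*} [Monoid G] [LinearOrder G]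
    [CovariantClass G G (· * ·) (· < ·)]
    [CovariantClass G G (Function.swap (· * ·)) (· < ·)]
    [IsCancelMul G]

/-- If `g₀` is a lower bound of the support of `a`, then the coefficient of `F * a`
at `g₀` is `F 1 * a g₀`. -/
lemma minCoeff_mul (hpos : ∀ s : G, 1 ≤ s) (F a : MonoidAlgebra R G) (g₀ : G)
    (ha : ∀ k ∈ a.coeff.support, g₀ ≤ k) : (F * a).coeff g₀ = F.coeff 1 * a.coeff g₀ := by
  classical
  rw [MonoidAlgebra.mul_apply, Finsupp.sum]
  have step : ∀ h ∈ F.coeff.support,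
      (Finsupp.sum a.coeff fun k b => if h * k = g₀ then F.coeff h * b else 0)
        = if h = 1 then F.coeff h * a.coeff g₀ else 0 := by
    intro h _
    rw [Finsupp.sum]
    by_cases h1 : h = 1
    · subst h1
      simp only [one_mul, if_pos rfl]
      rw [Finset.sum_ite_eq' a.coeff.support g₀ (fun k => F.coeff 1 * a.coeff k)]
      by_cases hg : g₀ ∈ a.coeff.support
      · rw [if_pos hg]; simp
      · rw [if_neg hg, Finsupp.notMem_support_iff.mp hg, mul_zero]; simp
    · rw [if_neg h1]
      apply Finset.sum_eq_zero
      intro k hk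
      rw [if_neg]
      intro hkg
      have hlt : k < h * k := by
        have h1lt : 1 < h := lt_of_le_of_ne (hpos h) (Ne.symm h1)
        calc k = 1 * k := (one_mul k).symm
          _ < h * k := mul_lt_mul_left h1lt k
      exact absurd (hkg ▸ ha k hk) (not_le_of_gt (hkg ▸ hlt))
  rw [Finset.sum_congr rfl step, Finset.sum_ite_eq' F.coeff.support 1 (fun h => F.coeff h * a.coeff g₀)]
  by_cases h1 : (1 : G) ∈ F.coeff.support
  · rw [if_pos h1]
  · rw [if_neg h1, Finsupp.notMem_support_iff.mp h1, zero_mul]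

/-- The coefficient at `1` of a product is the product of coefficients at `1`. -/
lemma coeff_one_mul (hpos : ∀ s : G, 1 ≤ s) (F a : MonoidAlgebra R G) :
    (F * a).coeff 1 = F.coeff 1 * a.coeff 1 :=
  minCoeff_mul hpos F a 1 (fun k _ => hpos k)

/-- Lemma A: if `E` is idempotent with `E 1 * s * c = 0` for all `s`, then
`E * f * single 1 c = 0` for all `f`. -/
lemma lemA (hpos : ∀ s : G, 1 ≤ s) (E : MonoidAlgebra R G) (hE : E * E = E) (c : R)
    (hc : ∀ s : R, E.coeff 1 * s * c = 0) (f : MonoidAlgebra R G) :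
    E * f * MonoidAlgebra.single 1 c = 0 := by
  classical
  by_contra hD
  set D := E * f * MonoidAlgebra.single 1 c with hDdef
  have hne : D.coeff.support.Nonempty :=
    Finsupp.support_nonempty_iff.mpr (mt MonoidAlgebra.coeff_eq_zero.mp hD)
  set g₀ := D.coeff.support.min' hne with hg₀
  have hmin : ∀ k ∈ D.coeff.support, g₀ ≤ k := fun k hk => D.coeff.support.min'_le k hk
  have hED : E * D = D := by
    rw [hDdef, ← mul_assoc, ← mul_assoc, hE]
  have h1 : D.coeff g₀ = E.coeff 1 * D.coeff g₀ := by
    conv_lhs => rw [← hED]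
    exact minCoeff_mul hpos E D g₀ hmin
  have h2 : D.coeff g₀ = (E * f).coeff g₀ * c := MonoidAlgebra.mul_single_one_apply (E * f) c g₀
  have h3 : D.coeff g₀ = 0 := by
    rw [h1, h2, ← mul_assoc]
    exact hc ((E * f).coeff g₀)
  exact Finsupp.mem_support_iff.mp (D.coeff.support.min'_mem hne) h3

end Aux

/-- For a positive linearly ordered cancellative monoid `G`, a ring `R` is right
𝔠𝔓-Baer iff the monoid ring `R[G]` is right 𝔠𝔓-Baer. -/
theorem isRightCPBaer_iff_monoidAlgebra
    {R : Type*} [Ring R] {G : Type*} [Monoid G] [LinearOrder G]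
    [CovariantClass G G (· * ·) (· < ·)]
    [CovariantClass G G (Function.swap (· * ·)) (· < ·)]
    [IsCancelMul G]
    (hpos : ∀ s : G, 1 ≤ s) :
    IsRightCPBaer R ↔ IsRightCPBaer (MonoidAlgebra R G) := by
  classical
  constructor
  · -- R cP-Baer → R[G] cP-Baer
    intro hR E hE
    set e := E.coeff 1 with he_def
    have he : e * e = e := by
      have := coeff_one_mul hpos E E
      rw [hE] at this
      exact this.symm
    obtain ⟨c, hc2, hc⟩ := hR e he
    have erc : ∀ s : R, e * s * c = 0 := fun s => (hc c).mpr ⟨c, hc2.symm⟩ s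
    have hA : ∀ f : MonoidAlgebra R G, E * f * MonoidAlgebra.single 1 c = 0 :=
      lemA hpos E hE c erc
    refine ⟨MonoidAlgebra.single 1 c, ?_, ?_⟩
    · rw [MonoidAlgebra.single_mul_single, one_mul, hc2]
    · intro a
      constructor
      · -- annihilated ⇒ in cR[G]
        intro h
        -- induction on support card
        have key : ∀ n (b : MonoidAlgebra R G), b.coeff.support.card ≤ n →
            (∀ f, E * f * b = 0) → ∃ f', b = MonoidAlgebra.single 1 c * f' := by
          intro n
          induction n with
          | zero =>
            intro b hb _
            have : b = 0 := by
              rw [← MonoidAlgebra.coeff_eq_zero, ← Finsupp.support_eq_empty, ← Finset.card_eq_zero]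
              omega
            exact ⟨0, by rw [this, mul_zero]⟩
          | succ n ih =>
            intro b hb hbann
            by_cases hb0 : b = 0
            · exact ⟨0, by rw [hb0, mul_zero]⟩
            · have hne : b.coeff.support.Nonempty :=
                Finsupp.support_nonempty_iff.mpr (mt MonoidAlgebra.coeff_eq_zero.mp hb0)
              set g₀ := b.coeff.support.min' hne with hg₀
              have hmin : ∀ k ∈ b.coeff.support, g₀ ≤ k := fun k hk => b.coeff.support.min'_le k hk
              have hcoeff : ∀ r : R, e * r * b.coeff g₀ = 0 := by
                intro r
                have h0 := hbann (MonoidAlgebra.single 1 r)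
                set F : MonoidAlgebra R G := E * MonoidAlgebra.single 1 r with hF
                have h1 : (F * b).coeff g₀ = F.coeff 1 * b.coeff g₀ := minCoeff_mul hpos F b g₀ hmin
                rw [hF] at h1
                rw [h0] at h1
                rw [MonoidAlgebra.mul_single_one_apply] at h1
                exact h1.symm
              obtain ⟨r₀, hr₀⟩ := (hc (b.coeff g₀)).mp hcoeff
              set b₁ : MonoidAlgebra R G := MonoidAlgebra.erase g₀ b with hb₁def
              have hb₁ : b₁ = b - MonoidAlgebra.single g₀ (b.coeff g₀) :=
                eq_sub_of_add_eq (MonoidAlgebra.erase_add_single g₀ b)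
              have hsupp : b₁.coeff.support = b.coeff.support.erase g₀ := Finsupp.support_erase
              have hcard : b₁.coeff.support.card ≤ n := by
                rw [hsupp, Finset.card_erase_of_mem (b.coeff.support.min'_mem hne)]
                omega
              have hann₁ : ∀ f, E * f * b₁ = 0 := by
                intro f
                rw [hb₁, mul_sub]
                have : MonoidAlgebra.single g₀ (b.coeff g₀)
                    = MonoidAlgebra.single 1 c * MonoidAlgebra.single g₀ r₀ := by
                  rw [MonoidAlgebra.single_mul_single, one_mul, ← hr₀]
                rw [this, ← mul_assoc, hA f, zero_mul, hbann f, sub_zero]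
              obtain ⟨f₁, hf₁⟩ := ih b₁ hcard hann₁
              refine ⟨f₁ + MonoidAlgebra.single g₀ r₀, ?_⟩
              have hbsum : b = b₁ + MonoidAlgebra.single g₀ (b.coeff g₀) := by
                rw [hb₁]; abel
              rw [hbsum, hf₁, mul_add, MonoidAlgebra.single_mul_single, one_mul, ← hr₀]
        exact key a.coeff.support.card a le_rfl h
      · rintro ⟨f', rfl⟩ f
        rw [← mul_assoc, hA f, zero_mul]
  · -- R[G] cP-Baer → R cP-Baer
    intro hS e he
    set E := MonoidAlgebra.single (1 : G) e with hEdef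
    have hE : E * E = E := by
      rw [hEdef, MonoidAlgebra.single_mul_single, one_mul, he]
    obtain ⟨C, hC2, hC⟩ := hS E hE
    refine ⟨C.coeff 1, ?_, ?_⟩
    · have := coeff_one_mul hpos C C
      rw [hC2] at this
      exact this.symm
    · intro a
      constructor
      · intro h
        have hann : ∀ f : MonoidAlgebra R G,
            E * f * MonoidAlgebra.single 1 a = 0 := by
          intro f
          ext g
          rw [hEdef, mul_assoc, MonoidAlgebra.single_one_mul_apply,
            MonoidAlgebra.mul_single_one_apply, ← mul_assoc, h (f.coeff g)]
          simp
        obtain ⟨r', hr'⟩ := (hC (MonoidAlgebra.single 1 a)).mp hann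
        refine ⟨r'.coeff 1, ?_⟩
        have := coeff_one_mul hpos C r'
        rw [← hr'] at this
        rw [MonoidAlgebra.single_apply, if_pos rfl] at this
        exact this
      · rintro ⟨r, rfl⟩ s
        have hCann : ∀ f : MonoidAlgebra R G, E * f * C = 0 :=
          (hC C).mpr ⟨C, hC2.symm⟩
        have h0 := hCann (MonoidAlgebra.single 1 s)
        set F : MonoidAlgebra R G := E * MonoidAlgebra.single 1 s with hF
        have h1 : (F * C).coeff 1 = F.coeff 1 * C.coeff 1 := coeff_one_mul hpos F C
        rw [hF] at h1
        rw [h0] at h1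
        rw [MonoidAlgebra.mul_single_one_apply, hEdef,
          MonoidAlgebra.single_apply, if_pos rfl] at h1
        have hesc : e * s * C.coeff 1 = 0 := h1.symm
        rw [← mul_assoc, hesc, zero_mul]
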